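/- Every tropical immersion h : Γ → ℝ² of a 3-valent graph Γ of genus g with x ends is regular: the space of tropical curves of the same combinatorial type has dimension exactly x + g - 1. -/

import Mathlib

open Finset

/-- The space of parameterized tropical curves `h : Γ → ℝ²` in a fixed combinatorial
type: the graph `Γ` and the primitive direction vectors `dir` of the bounded edges are
fixed, and the curve is determined by the positions of the vertices. -/
def modOfType {V E : Type} (src tgt : E → V) (dir : E → Fin 2 → ℤ) :
    Set (V → Fin 2 → ℝ) :=
  {pos | ∀ e : E, ∃ t : ℝ, 0 < t ∧
    ∀ i, pos (tgt e) i - pos (src e) i = t * (dir e i : ℝ)}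

lemma prim_parallel (d₁ d₂ : Fin 2 → ℤ)
    (h₁ : ∀ c : ℤ, (∀ i, c ∣ d₁ i) → IsUnit c)
    (h₂ : ∀ c : ℤ, (∀ i, c ∣ d₂ i) → IsUnit c)
    (hcross : d₁ 0 * d₂ 1 = d₁ 1 * d₂ 0) :
    d₂ = d₁ ∨ d₂ = -d₁ := by
  set p := d₁ 0 with hp
  set q := d₁ 1 with hq
  set r := d₂ 0 with hr
  set s := d₂ 1 with hs
  have hcop₁ : IsCoprime p q := by
    rw [Int.isCoprime_iff_gcd_eq_one]
    have hu : IsUnit ((Int.gcd p q : ℤ)) := by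
      refine h₁ _ ?_
      intro i
      fin_cases i
      · exact Int.gcd_dvd_left p q
      · exact Int.gcd_dvd_right p q
    rcases Int.isUnit_iff.mp hu with h | h <;> omega
  have hcop₂ : IsCoprime r s := by
    rw [Int.isCoprime_iff_gcd_eq_one]
    have hu : IsUnit ((Int.gcd r s : ℤ)) := by
      refine h₂ _ ?_
      intro i
      fin_cases i
      · exact Int.gcd_dvd_left r s
      · exact Int.gcd_dvd_right r s
    rcases Int.isUnit_iff.mp hu with h | h <;> omega
  have hpr : p ∣ r := hcop₁.dvd_of_dvd_mul_left ⟨s, hcross.symm⟩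
  have hrp : r ∣ p := hcop₂.dvd_of_dvd_mul_left ⟨q, by linear_combination hcross⟩
  have hqs : q ∣ s := (hcop₁.symm).dvd_of_dvd_mul_left ⟨r, hcross⟩
  have hsq : s ∣ q := (hcop₂.symm).dvd_of_dvd_mul_left ⟨p, by linear_combination - hcross⟩
  have h1 : r = p ∨ r = -p := Int.associated_iff.mp (associated_of_dvd_dvd hrp hpr)
  have h2 : s = q ∨ s = -q := Int.associated_iff.mp (associated_of_dvd_dvd hsq hqs)
  have hfin : ∀ x : Fin 2, x = 0 ∨ x = 1 := by decide
  rcases h1 with h1 | h1 <;> rcases h2 with h2 | h2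
  · left; funext i; rcases hfin i with h | h <;> subst h <;> omega
  · have h2pq : p * q * 2 = 0 := by linear_combination - hcross - q * h1 + p * h2
    have hpq : p * q = 0 := by linarith
    rcases mul_eq_zero.mp hpq with h0 | h0
    · right; funext i; rcases hfin i with h | h <;> subst h <;> simp [Pi.neg_apply] <;> omega
    · left; funext i; rcases hfin i with h | h <;> subst h <;> omega
  · have h2pq : p * q * 2 = 0 := by linear_combination hcross + q * h1 - p * h2
    have hpq : p * q = 0 := by linarith
    rcases mul_eq_zero.mp hpq with h0 | h0
    · left; funext i; rcases hfin i with h | h <;> subst h <;> omega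
    · right; funext i; rcases hfin i with h | h <;> subst h <;> simp [Pi.neg_apply] <;> omega
  · right; funext i; rcases hfin i with h | h <;> subst h <;> simp [Pi.neg_apply] <;> omega

lemma core_zero
    {V E L : Type} [Fintype V] [Fintype E] [Fintype L] [DecidableEq V] [DecidableEq E]
    (src tgt : E → V) (leg : L → V) (w : E → ℕ) (wl : L → ℕ)
    (dir : E → Fin 2 → ℤ) (dirl : L → Fin 2 → ℤ) (pos : V → Fin 2 → ℝ)
    (hw : ∀ e, 0 < w e)
    (hprim : ∀ e (c : ℤ), (∀ i, c ∣ dir e i) → IsUnit c)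
    (h3 : ∀ v : V,
      (univ.filter fun e : E => src e = v).card +
          (univ.filter fun e : E => tgt e = v).card +
        (univ.filter fun l : L => leg l = v).card = 3)
    (hbal : ∀ v : V,
      ((∑ e ∈ univ.filter (fun e => src e = v), (w e : ℤ) • dir e) -
          ∑ e ∈ univ.filter (fun e => tgt e = v), (w e : ℤ) • dir e) +
        ∑ l ∈ univ.filter (fun l => leg l = v), (wl l : ℤ) • dirl l = 0)
    (hpos : pos ∈ modOfType src tgt dir)
    (himm : Function.Injective fun f : E ⊕ E ⊕ L =>
      (Sum.elim src (Sum.elim tgt leg) f,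
        Sum.elim (fun e => dir e) (Sum.elim (fun e i => -dir e i) fun l => dirl l) f))
    (a : E → ℝ)
    (hrel : ∀ v (j : Fin 2),
      ∑ e ∈ univ.filter (fun e => tgt e = v), a e * (dir e j : ℝ)
        = ∑ e ∈ univ.filter (fun e => src e = v), a e * (dir e j : ℝ)) :
    a = 0 := by
  classical
  by_contra ha
  obtain ⟨e₀, he₀⟩ : ∃ e, a e ≠ 0 := by
    by_contra h
    push_neg at h
    exact ha (funext fun e => h e)
  have hfin2 : ∀ x : Fin 2, x = 0 ∨ x = 1 := by decide
  -- directions are nonzero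
  have hdne : ∀ e : E, ¬ (∀ i, dir e i = 0) := by
    intro e h
    have := hprim e 2 (fun i => by rw [h i]; exact dvd_zero 2)
    rw [Int.isUnit_iff] at this
    omega
  -- choose a generic direction r
  obtain ⟨r, hr⟩ := Infinite.exists_notMem_finset
    ((univ : Finset E).image fun e => -(dir e 0 : ℝ) / (dir e 1 : ℝ))
  set Lf : (Fin 2 → ℤ) → ℝ := fun d => (d 0 : ℝ) + r * (d 1 : ℝ) with hLf
  have hLne : ∀ e : E, Lf (dir e) ≠ 0 := by
    intro e h
    by_cases h1 : dir e 1 = 0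
    · have h0 : (dir e 0 : ℝ) = 0 := by simpa [hLf, h1] using h
      have h0' : dir e 0 = 0 := by exact_mod_cast h0
      exact hdne e (fun i => by rcases hfin2 i with hi | hi <;> subst hi <;> assumption)
    · apply hr
      apply mem_image.mpr
      refine ⟨e, mem_univ e, ?_⟩
      have h1' : (dir e 1 : ℝ) ≠ 0 := by exact_mod_cast h1
      rw [div_eq_iff h1']
      simp only [hLf] at h
      linarith [h]
  have hLneg : ∀ d : Fin 2 → ℤ, Lf (-d) = - Lf d := by
    intro d; simp [hLf]; ring
  -- height function
  set f : V → ℝ := fun v => pos v 0 + r * pos v 1 with hf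
  have hedge : ∀ e : E, ∃ t : ℝ, 0 < t ∧ f (tgt e) - f (src e) = t * Lf (dir e) := by
    intro e
    obtain ⟨t, ht, heq⟩ := hpos e
    refine ⟨t, ht, ?_⟩
    simp only [hf, hLf]
    rw [show pos (tgt e) 0 + r * pos (tgt e) 1 -
      (pos (src e) 0 + r * pos (src e) 1) = (pos (tgt e) 0 - pos (src e) 0) +
      r * (pos (tgt e) 1 - pos (src e) 1) by ring, heq 0, heq 1]
    ring
  have hnoloop : ∀ e : E, src e ≠ tgt e := by
    intro e h
    obtain ⟨t, ht, heq⟩ := hedge e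
    rw [← h, sub_self] at heq
    rcases mul_eq_zero.mp heq.symm with h' | h'
    · exact absurd h' (ne_of_gt ht)
    · exact hLne e h'
  -- the set of vertices incident to supported edges
  set VS : Finset V := univ.filter (fun v => ∃ e, a e ≠ 0 ∧ (src e = v ∨ tgt e = v)) with hVS
  have hVSne : VS.Nonempty := ⟨src e₀, by
    simp only [hVS, mem_filter, mem_univ, true_and]
    exact ⟨e₀, he₀, Or.inl rfl⟩⟩
  obtain ⟨v, hv, hmax⟩ := Finset.exists_max_image VS f hVSne
  set P : Finset E := univ.filter (fun e => src e = v ∧ a e ≠ 0) with hP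
  set Q : Finset E := univ.filter (fun e => tgt e = v ∧ a e ≠ 0) with hQ
  have hPQ : Disjoint P Q := by
    rw [Finset.disjoint_left]
    intro e heP heQ
    simp only [hP, mem_filter, mem_univ, true_and] at heP
    simp only [hQ, mem_filter, mem_univ, true_and] at heQ
    exact hnoloop e (heP.1.trans heQ.1.symm)
  have hPneg : ∀ e ∈ P, Lf (dir e) < 0 := by
    intro e heP
    simp only [hP, mem_filter, mem_univ, true_and] at heP
    have htgt : tgt e ∈ VS := by
      simp only [hVS, mem_filter, mem_univ, true_and]
      exact ⟨e, heP.2, Or.inr rfl⟩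
    have hle : f (tgt e) ≤ f v := hmax _ htgt
    obtain ⟨t, ht, heq⟩ := hedge e
    rw [heP.1] at heq
    have h0 : t * Lf (dir e) ≤ 0 := by linarith
    have hL : Lf (dir e) ≤ 0 := by nlinarith
    exact lt_of_le_of_ne hL (hLne e)
  have hQpos : ∀ e ∈ Q, 0 < Lf (dir e) := by
    intro e heQ
    simp only [hQ, mem_filter, mem_univ, true_and] at heQ
    have hsrc : src e ∈ VS := by
      simp only [hVS, mem_filter, mem_univ, true_and]
      exact ⟨e, heQ.2, Or.inl rfl⟩
    have hle : f (src e) ≤ f v := hmax _ hsrc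
    obtain ⟨t, ht, heq⟩ := hedge e
    rw [heQ.1] at heq
    have h0 : 0 ≤ t * Lf (dir e) := by linarith
    have hL : 0 ≤ Lf (dir e) := by nlinarith
    exact lt_of_le_of_ne hL (Ne.symm (hLne e))
  -- restricted vertex relation
  have hPsub : P ⊆ univ.filter (fun e => src e = v) := by
    intro e he
    simp only [hP, mem_filter, mem_univ, true_and] at he ⊢
    exact he.1
  have hQsub : Q ⊆ univ.filter (fun e => tgt e = v) := by
    intro e he
    simp only [hQ, mem_filter, mem_univ, true_and] at he ⊢
    exact he.1
  have hrelS : ∀ j : Fin 2,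
      ∑ e ∈ Q, a e * (dir e j : ℝ) = ∑ e ∈ P, a e * (dir e j : ℝ) := by
    intro j
    have h1 : ∑ e ∈ univ.filter (fun e => tgt e = v), a e * (dir e j : ℝ)
        = ∑ e ∈ Q, a e * (dir e j : ℝ) := by
      refine (Finset.sum_subset hQsub ?_).symm
      intro e he hne
      simp only [mem_filter, mem_univ, true_and] at he
      simp only [hQ, mem_filter, mem_univ, true_and, not_and, not_not] at hne
      rw [hne he, zero_mul]
    have h2 : ∑ e ∈ univ.filter (fun e => src e = v), a e * (dir e j : ℝ)
        = ∑ e ∈ P, a e * (dir e j : ℝ) := by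
      refine (Finset.sum_subset hPsub ?_).symm
      intro e he hne
      simp only [mem_filter, mem_univ, true_and] at he
      simp only [hP, mem_filter, mem_univ, true_and, not_and, not_not] at hne
      rw [hne he, zero_mul]
    rw [← h1, ← h2, hrel v j]
  -- the signed coefficients
  set c : E → ℝ := fun e => if e ∈ P then a e else -a e with hc
  have hrelC : ∀ j : Fin 2, ∑ e ∈ P ∪ Q, c e * (dir e j : ℝ) = 0 := by
    intro j
    rw [Finset.sum_union hPQ]
    have h1 : ∑ e ∈ P, c e * (dir e j : ℝ) = ∑ e ∈ P, a e * (dir e j : ℝ) :=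
      Finset.sum_congr rfl (fun e he => by simp [hc, he])
    have h2 : ∑ e ∈ Q, c e * (dir e j : ℝ) = -∑ e ∈ Q, a e * (dir e j : ℝ) := by
      rw [← Finset.sum_neg_distrib]
      refine Finset.sum_congr rfl (fun e he => ?_)
      have : e ∉ P := Finset.disjoint_right.mp hPQ he
      simp [hc, this]
    rw [h1, h2, hrelS j]
    ring
  have hcne : ∀ e ∈ P ∪ Q, c e ≠ 0 := by
    intro e he
    rcases Finset.mem_union.mp he with h | h
    · have hp : e ∈ P := h
      simp only [hP, mem_filter, mem_univ, true_and] at h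
      simp only [hc, if_pos hp]
      exact h.2
    · have hnp : e ∉ P := Finset.disjoint_right.mp hPQ h
      simp only [hQ, mem_filter, mem_univ, true_and] at h
      simp only [hc, if_neg hnp, neg_ne_zero]
      exact h.2
  -- cardinality constraints
  have hk1 : 1 ≤ P.card + Q.card := by
    simp only [hVS, mem_filter, mem_univ, true_and] at hv
    obtain ⟨e, hae, hor⟩ := hv
    rcases hor with h | h
    · have heP : e ∈ P := by
        simp only [hP, mem_filter, mem_univ, true_and]; exact ⟨h, hae⟩
      have := Finset.card_pos.mpr ⟨e, heP⟩
      omega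
    · have heQ : e ∈ Q := by
        simp only [hQ, mem_filter, mem_univ, true_and]; exact ⟨h, hae⟩
      have := Finset.card_pos.mpr ⟨e, heQ⟩
      omega
  have hk3 : P.card + Q.card ≤ 3 := by
    have h1 := Finset.card_le_card hPsub
    have h2 := Finset.card_le_card hQsub
    have := h3 v
    omega
  have hcardU : (P ∪ Q).card = P.card + Q.card := Finset.card_union_of_disjoint hPQ
  -- case analysis on the number of germs in the support
  have hk : P.card + Q.card = 1 ∨ P.card + Q.card = 2 ∨ P.card + Q.card = 3 := by omega
  rcases hk with hk | hk | hk
  · -- one germ: its direction would be zero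
    obtain ⟨e₁, hU⟩ := Finset.card_eq_one.mp (by rw [hcardU]; exact hk)
    have he₁ : e₁ ∈ P ∪ Q := by rw [hU]; exact Finset.mem_singleton_self e₁
    have hz : ∀ j : Fin 2, (dir e₁ j : ℝ) = 0 := by
      intro j
      have := hrelC j
      rw [hU, Finset.sum_singleton] at this
      rcases mul_eq_zero.mp this with h | h
      · exact absurd h (hcne e₁ he₁)
      · exact h
    exact hdne e₁ (fun i => by exact_mod_cast hz i)
  · -- two germs: parallel directions
    obtain ⟨e₁, e₂, hne, hU⟩ := Finset.card_eq_two.mp (by rw [hcardU]; exact hk)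
    have he₁ : e₁ ∈ P ∪ Q := by rw [hU]; simp
    have he₂ : e₂ ∈ P ∪ Q := by rw [hU]; simp
    have hsum : ∀ j : Fin 2, c e₁ * (dir e₁ j : ℝ) + c e₂ * (dir e₂ j : ℝ) = 0 := by
      intro j
      have := hrelC j
      rwa [hU, Finset.sum_pair hne] at this
    -- cross product vanishes
    have hcrossR : (dir e₁ 0 : ℝ) * (dir e₂ 1 : ℝ) = (dir e₁ 1 : ℝ) * (dir e₂ 0 : ℝ) := by
      have h0 := hsum 0
      have h1 := hsum 1
      have hc1 : c e₁ ≠ 0 := hcne e₁ he₁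
      have key : c e₁ * ((dir e₁ 0 : ℝ) * (dir e₂ 1 : ℝ) - (dir e₁ 1 : ℝ) * (dir e₂ 0 : ℝ)) = 0 := by
        linear_combination (dir e₂ 1 : ℝ) * h0 - (dir e₂ 0 : ℝ) * h1
      rcases mul_eq_zero.mp key with h | h
      · exact absurd h hc1
      · linarith
    have hcrossZ : dir e₁ 0 * dir e₂ 1 = dir e₁ 1 * dir e₂ 0 := by exact_mod_cast hcrossR
    have hpar := prim_parallel (dir e₁) (dir e₂) (hprim e₁) (hprim e₂) hcrossZ
    -- signs of the germ directions at v
    -- germ of e at v and its outgoing direction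
    have hgermP : ∀ e ∈ P, src e = v ∧ Lf (dir e) < 0 := by
      intro e he
      refine ⟨?_, hPneg e he⟩
      simp only [hP, mem_filter, mem_univ, true_and] at he
      exact he.1
    have hgermQ : ∀ e ∈ Q, tgt e = v ∧ 0 < Lf (dir e) := by
      intro e he
      refine ⟨?_, hQpos e he⟩
      simp only [hQ, mem_filter, mem_univ, true_and] at he
      exact he.1
    -- four cases
    rcases Finset.mem_union.mp he₁ with h1 | h1 <;> rcases Finset.mem_union.mp he₂ with h2 | h2
    · -- both in P
      obtain ⟨hs1, hL1⟩ := hgermP e₁ h1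
      obtain ⟨hs2, hL2⟩ := hgermP e₂ h2
      rcases hpar with hpp | hpp
      · -- same direction: contradicts immersion
        have : (Sum.inl e₁ : E ⊕ E ⊕ L) = Sum.inl e₂ := by
          apply himm
          simp only [Sum.elim_inl]
          exact Prod.ext (hs1.trans hs2.symm) hpp.symm
        exact hne (Sum.inl.inj this)
      · -- opposite direction: both heights negative
        rw [hpp, hLneg] at hL2
        linarith
    · -- e₁ ∈ P, e₂ ∈ Q
      obtain ⟨hs1, hL1⟩ := hgermP e₁ h1
      obtain ⟨hs2, hL2⟩ := hgermQ e₂ h2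
      rcases hpar with hpp | hpp
      · rw [hpp] at hL2
        linarith
      · -- dir e₂ = -dir e₁ : germs coincide
        have : (Sum.inl e₁ : E ⊕ E ⊕ L) = Sum.inr (Sum.inl e₂) := by
          apply himm
          simp only [Sum.elim_inl, Sum.elim_inr]
          refine Prod.ext (hs1.trans hs2.symm) ?_
          funext i
          have := congrFun hpp i
          simp only [Pi.neg_apply] at this
          simp
          omega
        simp at this
    · -- e₁ ∈ Q, e₂ ∈ P
      obtain ⟨hs1, hL1⟩ := hgermQ e₁ h1
      obtain ⟨hs2, hL2⟩ := hgermP e₂ h2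
      rcases hpar with hpp | hpp
      · rw [hpp] at hL2
        linarith
      · have : (Sum.inl e₂ : E ⊕ E ⊕ L) = Sum.inr (Sum.inl e₁) := by
          apply himm
          simp only [Sum.elim_inl, Sum.elim_inr]
          refine Prod.ext (hs2.trans hs1.symm) ?_
          funext i
          have := congrFun hpp i
          simp only [Pi.neg_apply] at this
          simp
          omega
        simp at this
    · -- both in Q
      obtain ⟨hs1, hL1⟩ := hgermQ e₁ h1
      obtain ⟨hs2, hL2⟩ := hgermQ e₂ h2
      rcases hpar with hpp | hpp
      · have : (Sum.inr (Sum.inl e₁) : E ⊕ E ⊕ L) = Sum.inr (Sum.inl e₂) := by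
          apply himm
          simp only [Sum.elim_inr, Sum.elim_inl]
          refine Prod.ext (hs1.trans hs2.symm) ?_
          funext i
          simp [hpp]
        simp at this
        exact hne this
      · rw [hpp, hLneg] at hL2
        linarith
  · -- three germs: all edges at v are in the support, no legs, balancing gives a contradiction
    have h1 := Finset.card_le_card hPsub
    have h2 := Finset.card_le_card hQsub
    have h3v := h3 v
    have hPfull : P = univ.filter (fun e => src e = v) :=
      Finset.eq_of_subset_of_card_le hPsub (by omega)
    have hQfull : Q = univ.filter (fun e => tgt e = v) :=
      Finset.eq_of_subset_of_card_le hQsub (by omega)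
    have hlegs : (univ.filter fun l : L => leg l = v) = ∅ :=
      Finset.card_eq_zero.mp (by omega)
    have hbalv := hbal v
    rw [hlegs, Finset.sum_empty, add_zero, sub_eq_zero, ← hPfull, ← hQfull] at hbalv
    have hZ : ∀ j : Fin 2, ∑ e ∈ P, (w e : ℤ) * dir e j = ∑ e ∈ Q, (w e : ℤ) * dir e j := by
      intro j
      have := congrFun hbalv j
      simpa [Finset.sum_apply, Pi.smul_apply, smul_eq_mul] using this
    have hR : ∀ j : Fin 2,
        ∑ e ∈ P, (w e : ℝ) * (dir e j : ℝ) = ∑ e ∈ Q, (w e : ℝ) * (dir e j : ℝ) := by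
      intro j
      have h' := congrArg (fun z : ℤ => (z : ℝ)) (hZ j)
      push_cast at h'
      exact h'
    have key : ∑ e ∈ P, (w e : ℝ) * Lf (dir e) = ∑ e ∈ Q, (w e : ℝ) * Lf (dir e) := by
      simp only [hLf]
      calc ∑ e ∈ P, (w e : ℝ) * ((dir e 0 : ℝ) + r * (dir e 1 : ℝ))
          = ∑ e ∈ P, ((w e : ℝ) * (dir e 0 : ℝ) + r * ((w e : ℝ) * (dir e 1 : ℝ))) := by
            refine Finset.sum_congr rfl (fun e _ => by ring)
        _ = ∑ e ∈ P, (w e : ℝ) * (dir e 0 : ℝ) + r * ∑ e ∈ P, (w e : ℝ) * (dir e 1 : ℝ) := by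
            rw [Finset.sum_add_distrib, Finset.mul_sum]
        _ = ∑ e ∈ Q, (w e : ℝ) * (dir e 0 : ℝ) + r * ∑ e ∈ Q, (w e : ℝ) * (dir e 1 : ℝ) := by
            rw [hR 0, hR 1]
        _ = ∑ e ∈ Q, ((w e : ℝ) * (dir e 0 : ℝ) + r * ((w e : ℝ) * (dir e 1 : ℝ))) := by
            rw [Finset.sum_add_distrib, Finset.mul_sum]
        _ = ∑ e ∈ Q, (w e : ℝ) * ((dir e 0 : ℝ) + r * (dir e 1 : ℝ)) := by
            refine Finset.sum_congr rfl (fun e _ => by ring)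
    have hwR : ∀ e : E, (0 : ℝ) < (w e : ℝ) := fun e => by exact_mod_cast hw e
    have hQge : (0 : ℝ) ≤ ∑ e ∈ Q, (w e : ℝ) * Lf (dir e) :=
      Finset.sum_nonneg (fun e he => le_of_lt (mul_pos (hwR e) (hQpos e he)))
    have hPle : ∑ e ∈ P, (w e : ℝ) * Lf (dir e) ≤ 0 :=
      Finset.sum_nonpos (fun e he => le_of_lt (mul_neg_of_pos_of_neg (hwR e) (hPneg e he)))
    rcases Finset.eq_empty_or_nonempty P with hPe | hPne'
    · have hQne : Q.Nonempty := by
        refine Finset.card_pos.mp ?_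
        have : P.card = 0 := by rw [hPe]; simp
        omega
      have hQpos' : (0 : ℝ) < ∑ e ∈ Q, (w e : ℝ) * Lf (dir e) := by
        have h' := Finset.sum_lt_sum_of_nonempty hQne
          (f := fun _ => (0 : ℝ)) (g := fun e => (w e : ℝ) * Lf (dir e))
          (fun e he => mul_pos (hwR e) (hQpos e he))
        simpa using h'
      rw [hPe] at key
      simp at key
      linarith
    · have hPneg' : ∑ e ∈ P, (w e : ℝ) * Lf (dir e) < 0 := by
        have h' := Finset.sum_lt_sum_of_nonempty hPne'
          (f := fun e => (w e : ℝ) * Lf (dir e)) (g := fun _ => (0 : ℝ))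
          (fun e he => mul_neg_of_pos_of_neg (hwR e) (hPneg e he))
        simpa using h'
      linarith


def crossMap {V E : Type} (src tgt : E → V) (dir : E → Fin 2 → ℤ) :
    (V → Fin 2 → ℝ) →ₗ[ℝ] (E → ℝ) where
  toFun p := fun e => (p (tgt e) 0 - p (src e) 0) * (dir e 1 : ℝ)
      - (p (tgt e) 1 - p (src e) 1) * (dir e 0 : ℝ)
  map_add' p q := funext fun e => by simp only [Pi.add_apply]; ring
  map_smul' m p := funext fun e => by
    simp only [Pi.smul_apply, smul_eq_mul, RingHom.id_apply]; ring

lemma crossMap_apply {V E : Type} (src tgt : E → V) (dir : E → Fin 2 → ℤ)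
    (p : V → Fin 2 → ℝ) (e : E) :
    crossMap src tgt dir p e = (p (tgt e) 0 - p (src e) 0) * (dir e 1 : ℝ)
      - (p (tgt e) 1 - p (src e) 1) * (dir e 0 : ℝ) := rfl

def dotf {V E : Type} (src tgt : E → V) (dir : E → Fin 2 → ℤ) (e : E)
    (p : V → Fin 2 → ℝ) : ℝ :=
  (p (tgt e) 0 - p (src e) 0) * (dir e 0 : ℝ)
    + (p (tgt e) 1 - p (src e) 1) * (dir e 1 : ℝ)

lemma dotf_continuous {V E : Type} (src tgt : E → V) (dir : E → Fin 2 → ℤ) (e : E) :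
    Continuous (dotf src tgt dir e) := by
  unfold dotf
  fun_prop

/-- Every tropical immersion `h : Γ → ℝ²` of a 3-valent graph `Γ` of
genus `g` with `x` ends is regular: the space of tropical curves of the same
combinatorial type has dimension exactly `x + g - 1`. -/
theorem trivalent_immersions_are_regular
    (x g : ℕ) (V E L : Type) [Fintype V] [Fintype E] [Fintype L] [DecidableEq V]
    (src tgt : E → V) (leg : L → V) (w : E → ℕ) (wl : L → ℕ)
    (dir : E → Fin 2 → ℤ) (dirl : L → Fin 2 → ℤ) (pos : V → Fin 2 → ℝ)
    -- positive natural weights and primitive integer direction vectors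
    (hw : ∀ e, 0 < w e) (hwl : ∀ l, 0 < wl l)
    (hprim : ∀ e (c : ℤ), (∀ i, c ∣ dir e i) → IsUnit c)
    (hpriml : ∀ l (c : ℤ), (∀ i, c ∣ dirl l i) → IsUnit c)
    -- `Γ` is 3-valent
    (h3 : ∀ v : V,
      (univ.filter fun e : E => src e = v).card +
          (univ.filter fun e : E => tgt e = v).card +
        (univ.filter fun l : L => leg l = v).card = 3)
    -- the balancing condition at every vertex
    (hbal : ∀ v : V,
      ((∑ e ∈ univ.filter (fun e => src e = v), (w e : ℤ) • dir e) -
          ∑ e ∈ univ.filter (fun e => tgt e = v), (w e : ℤ) • dir e) +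
        ∑ l ∈ univ.filter (fun l => leg l = v), (wl l : ℤ) • dirl l = 0)
    -- `h` is an immersion: no edge is contracted (positions realize the directions),
    -- and distinct germs of edges at a common vertex point in distinct directions
    (hpos : pos ∈ modOfType src tgt dir)
    (himm : Function.Injective fun f : E ⊕ E ⊕ L =>
      (Sum.elim src (Sum.elim tgt leg) f,
        Sum.elim (fun e => dir e) (Sum.elim (fun e i => -dir e i) fun l => dirl l) f))
    -- `x` is the number of ends and `g` the genus of `Γ`
    (hx : x = Fintype.card L)
    (hg : (g : ℤ) = (Fintype.card E : ℤ) - Fintype.card V + 1) :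
    ∃ A : AffineSubspace ℝ (V → Fin 2 → ℝ),
      modOfType src tgt dir ⊆ (A : Set (V → Fin 2 → ℝ)) ∧
      Convex ℝ (modOfType src tgt dir) ∧
      IsOpen {q : A | (q : V → Fin 2 → ℝ) ∈ modOfType src tgt dir} ∧
      (Module.finrank ℝ A.direction : ℤ) = (x : ℤ) + g - 1 := by
  classical
  have hfin2 : ∀ i : Fin 2, i = 0 ∨ i = 1 := by decide
  -- directions are nonzero
  have hdne : ∀ e : E, ¬ (dir e 0 = 0 ∧ dir e 1 = 0) := by
    intro e h
    have := hprim e 2 (fun i => by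
      rcases hfin2 i with hi | hi <;> subst hi <;> [rw [h.1]; rw [h.2]] <;> exact dvd_zero 2)
    rw [Int.isUnit_iff] at this
    omega
  have hnsq : ∀ e : E, (0:ℝ) < (dir e 0 : ℝ)^2 + (dir e 1 : ℝ)^2 := by
    intro e
    rcases not_and_or.mp (hdne e) with h | h
    · have : (dir e 0 : ℝ) ≠ 0 := by exact_mod_cast h
      positivity
    · have : (dir e 1 : ℝ) ≠ 0 := by exact_mod_cast h
      positivity
  -- the cross-product linear map
  set Φ : (V → Fin 2 → ℝ) →ₗ[ℝ] (E → ℝ) := crossMap src tgt dir with hΦ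
  have hΦapp : ∀ (p : V → Fin 2 → ℝ) (e : E),
      Φ p e = (p (tgt e) 0 - p (src e) 0) * (dir e 1 : ℝ)
        - (p (tgt e) 1 - p (src e) 1) * (dir e 0 : ℝ) := fun p e => rfl
  set dot : E → (V → Fin 2 → ℝ) → ℝ := dotf src tgt dir with hdot
  have hdotapp : ∀ (e : E) (p : V → Fin 2 → ℝ),
      dot e p = (p (tgt e) 0 - p (src e) 0) * (dir e 0 : ℝ)
        + (p (tgt e) 1 - p (src e) 1) * (dir e 1 : ℝ) := fun e p => rfl
  -- membership in the kernel of Φ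
  have hsubW : ∀ p ∈ modOfType src tgt dir, Φ p = 0 := by
    intro p hp
    funext e
    obtain ⟨t, ht, heq⟩ := hp e
    rw [Pi.zero_apply, hΦapp, heq 0, heq 1]
    ring
  have hdotpos : ∀ p ∈ modOfType src tgt dir, ∀ e, 0 < dot e p := by
    intro p hp e
    obtain ⟨t, ht, heq⟩ := hp e
    rw [hdotapp, heq 0, heq 1]
    have := hnsq e
    nlinarith
  have hmemW : ∀ p, Φ p = 0 → (∀ e, 0 < dot e p) → p ∈ modOfType src tgt dir := by
    intro p hker hpos' e
    have hc := congrFun hker e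
    rw [hΦapp, Pi.zero_apply] at hc
    have hd := hpos' e
    have hn0 : 0 < (dir e 0 : ℝ)^2 + (dir e 1 : ℝ)^2 := hnsq e
    refine ⟨dot e p / ((dir e 0 : ℝ)^2 + (dir e 1 : ℝ)^2), div_pos hd hn0, ?_⟩
    intro i
    rw [div_mul_eq_mul_div, eq_div_iff (ne_of_gt hn0), hdotapp]
    rcases hfin2 i with hi | hi <;> subst hi
    · linear_combination (dir e 1 : ℝ) * hc
    · linear_combination (-(dir e 0 : ℝ)) * hc
  refine ⟨(LinearMap.ker Φ).toAffineSubspace, ?_, ?_, ?_, ?_⟩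
  · intro p hp
    exact Submodule.mem_toAffineSubspace.mpr (LinearMap.mem_ker.mpr (hsubW p hp))
  · -- convexity
    intro p hp q hq u v hu hv huv
    intro e
    obtain ⟨s, hs, hseq⟩ := hp e
    obtain ⟨t, ht, hteq⟩ := hq e
    refine ⟨u * s + v * t, ?_, ?_⟩
    · rcases eq_or_lt_of_le hu with h | h
      · have hv' : 0 < v := by linarith [huv, h.symm]
        nlinarith
      · nlinarith
    · intro i
      simp only [Pi.add_apply, Pi.smul_apply, smul_eq_mul]
      rw [show u * p (tgt e) i + v * q (tgt e) i - (u * p (src e) i + v * q (src e) i)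
        = u * (p (tgt e) i - p (src e) i) + v * (q (tgt e) i - q (src e) i) by ring,
        hseq i, hteq i]
      ring
  · -- openness
    have hset : {q : (LinearMap.ker Φ).toAffineSubspace |
        (q : V → Fin 2 → ℝ) ∈ modOfType src tgt dir}
        = (fun q : (LinearMap.ker Φ).toAffineSubspace => (q : V → Fin 2 → ℝ)) ⁻¹'
          (⋂ e : E, {p | 0 < dot e p}) := by
      ext q
      simp only [Set.mem_setOf_eq, Set.mem_preimage, Set.mem_iInter]
      constructor
      · intro h e
        exact hdotpos _ h e
      · intro h
        have hker : Φ (q : V → Fin 2 → ℝ) = 0 :=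
          LinearMap.mem_ker.mp (Submodule.mem_toAffineSubspace.mp q.2)
        exact hmemW _ hker h
    rw [hset]
    refine IsOpen.preimage continuous_subtype_val ?_
    refine isOpen_iInter_of_finite (fun e => ?_)
    exact isOpen_lt continuous_const (by rw [hdot]; exact dotf_continuous src tgt dir e)
  · -- dimension
    rw [Submodule.toAffineSubspace_direction]
    -- Φ is surjective
    have hsurj : LinearMap.range Φ = ⊤ := by
      by_contra hne
      obtain ⟨f, hf0, hfmap⟩ := Submodule.exists_dual_map_eq_bot_of_lt_top
        (lt_top_iff_ne_top.mpr hne) inferInstance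
      set a : E → ℝ := fun e => f (fun j => if e = j then 1 else 0) with ha
      have hfa : ∀ y : E → ℝ, f y = ∑ e, y e * a e := by
        intro y
        rw [LinearMap.pi_apply_eq_sum_univ f y]
        refine Finset.sum_congr rfl (fun e _ => ?_)
        rw [smul_eq_mul, ha]
      have hz : ∀ p : V → Fin 2 → ℝ, ∑ e, Φ p e * a e = 0 := by
        intro p
        have hmem : f (Φ p) ∈ Submodule.map f (LinearMap.range Φ) :=
          Submodule.mem_map_of_mem (LinearMap.mem_range_self Φ p)
        rw [hfmap, Submodule.mem_bot] at hmem
        rw [← hfa]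
        exact hmem
      have hrel : ∀ (v : V) (j : Fin 2),
          ∑ e ∈ univ.filter (fun e => tgt e = v), a e * (dir e j : ℝ)
            = ∑ e ∈ univ.filter (fun e => src e = v), a e * (dir e j : ℝ) := by
        intro v j
        have hsplit : ∀ (c : E → ℝ),
            (∑ e, ((if tgt e = v then (1:ℝ) else 0) - (if src e = v then (1:ℝ) else 0)) * c e)
              = ∑ e ∈ univ.filter (fun e => tgt e = v), c e
                - ∑ e ∈ univ.filter (fun e => src e = v), c e := by
          intro c
          rw [Finset.sum_filter, Finset.sum_filter, ← Finset.sum_sub_distrib]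
          refine Finset.sum_congr rfl (fun e _ => ?_)
          by_cases h1 : tgt e = v <;> by_cases h2 : src e = v <;> simp [h1, h2]
        rcases hfin2 j with hj | hj <;> subst hj
        · -- j = 0 : test position concentrated in coordinate 1
          set p : V → Fin 2 → ℝ :=
            fun u i => (if u = v then (1:ℝ) else 0) * (if i = 1 then 1 else 0) with hp
          have hzp := hz p
          have hΦp : ∀ e, Φ p e =
              -((((if tgt e = v then (1:ℝ) else 0) - (if src e = v then (1:ℝ) else 0))
                * (dir e 0 : ℝ))) := by
            intro e
            rw [hΦapp]
            simp only [hp]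
            norm_num
          have h' : ∑ e, ((if tgt e = v then (1:ℝ) else 0) - (if src e = v then (1:ℝ) else 0))
              * (a e * (dir e 0 : ℝ)) = 0 := by
            have hneg : ∑ e, Φ p e * a e
                = - ∑ e, ((if tgt e = v then (1:ℝ) else 0) - (if src e = v then (1:ℝ) else 0))
                  * (a e * (dir e 0 : ℝ)) := by
              rw [← Finset.sum_neg_distrib]
              refine Finset.sum_congr rfl (fun e _ => by rw [hΦp e]; ring)
            rw [hneg] at hzp
            linarith
          rw [hsplit] at h'
          linarith
        · -- j = 1 : test position concentrated in coordinate 0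
          set p : V → Fin 2 → ℝ :=
            fun u i => (if u = v then (1:ℝ) else 0) * (if i = 0 then 1 else 0) with hp
          have hzp := hz p
          have hΦp : ∀ e, Φ p e =
              (((if tgt e = v then (1:ℝ) else 0) - (if src e = v then (1:ℝ) else 0))
                * (dir e 1 : ℝ)) := by
            intro e
            rw [hΦapp]
            simp only [hp]
            norm_num
          have h' : ∑ e, ((if tgt e = v then (1:ℝ) else 0) - (if src e = v then (1:ℝ) else 0))
              * (a e * (dir e 1 : ℝ)) = 0 := by
            have heq : ∑ e, Φ p e * a e
                = ∑ e, ((if tgt e = v then (1:ℝ) else 0) - (if src e = v then (1:ℝ) else 0))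
                  * (a e * (dir e 1 : ℝ)) := by
              refine Finset.sum_congr rfl (fun e _ => by rw [hΦp e]; ring)
            rw [heq] at hzp
            exact hzp
          rw [hsplit] at h'
          linarith
      have haz : a = 0 :=
        core_zero src tgt leg w wl dir dirl pos hw hprim h3 hbal hpos himm a hrel
      apply hf0
      apply LinearMap.ext
      intro y
      rw [hfa y, haz]
      simp
    -- rank-nullity
    have hrn := LinearMap.finrank_range_add_finrank_ker Φ
    rw [hsurj] at hrn
    have htop : Module.finrank ℝ (⊤ : Submodule ℝ (E → ℝ)) = Fintype.card E := by
      rw [finrank_top, Module.finrank_pi]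
    have hdom : Module.finrank ℝ (V → Fin 2 → ℝ) = Fintype.card V * 2 := by
      rw [Module.finrank_pi_fintype]
      have : ∀ v : V, Module.finrank ℝ (Fin 2 → ℝ) = 2 := by
        intro v
        rw [Module.finrank_pi]
        simp
      simp only [Module.finrank_pi]
      simp [Finset.sum_const, Finset.card_univ]
    rw [htop, hdom] at hrn
    -- the counting identity 2|E| + |L| = 3|V|
    have hcount : 2 * Fintype.card E + Fintype.card L = 3 * Fintype.card V := by
      have hsrc : ∑ v : V, (univ.filter fun e : E => src e = v).card = Fintype.card E := by
        rw [← Finset.card_univ,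
          Finset.card_eq_sum_card_fiberwise (f := src) (fun e _ => Finset.mem_univ (src e))]
      have htgt : ∑ v : V, (univ.filter fun e : E => tgt e = v).card = Fintype.card E := by
        rw [← Finset.card_univ,
          Finset.card_eq_sum_card_fiberwise (f := tgt) (fun e _ => Finset.mem_univ (tgt e))]
      have hleg : ∑ v : V, (univ.filter fun l : L => leg l = v).card = Fintype.card L := by
        rw [← Finset.card_univ,
          Finset.card_eq_sum_card_fiberwise (f := leg) (fun l _ => Finset.mem_univ (leg l))]
      have hsum : ∑ v : V, ((univ.filter fun e : E => src e = v).card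
          + (univ.filter fun e : E => tgt e = v).card
          + (univ.filter fun l : L => leg l = v).card) = 3 * Fintype.card V := by
        rw [Finset.sum_congr rfl (fun v _ => h3 v)]
        simp [Finset.sum_const, Finset.card_univ, mul_comm]
      rw [Finset.sum_add_distrib, Finset.sum_add_distrib, hsrc, htgt, hleg] at hsum
      omega
    rw [hx, hg]
    have h1 : (Fintype.card E : ℤ) + (Module.finrank ℝ (LinearMap.ker Φ) : ℤ)
        = (Fintype.card V : ℤ) * 2 := by exact_mod_cast hrn
    have h2 : 2 * (Fintype.card E : ℤ) + (Fintype.card L : ℤ)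
        = 3 * (Fintype.card V : ℤ) := by exact_mod_cast hcount
    omega
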